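/- The exponential map on the manifold of Hermitian positive definite matrices is equivariant under congruence: for any invertible matrix a, Hermitian positive definite p, and Hermitian h, one has a* Exp_p(h) a = Exp_{a* p a}(a* h a). -/

import Mathlib

open Matrix
open scoped ComplexOrder Classical

/-- Matrix logarithm of a Hermitian (in particular HPD) matrix, via the spectral theorem. -/
noncomputable def mLog {d : ℕ} (A : Matrix (Fin d) (Fin d) ℂ) : Matrix (Fin d) (Fin d) ℂ :=
  if hA : A.IsHermitian then
    (hA.eigenvectorUnitary : Matrix (Fin d) (Fin d) ℂ) *
      Matrix.diagonal (fun i => (Real.log (hA.eigenvalues i) : ℂ)) *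
      (star hA.eigenvectorUnitary : Matrix (Fin d) (Fin d) ℂ)
  else 0

/-- Matrix exponential. -/
noncomputable def mExp {d : ℕ} (A : Matrix (Fin d) (Fin d) ℂ) : Matrix (Fin d) (Fin d) ℂ :=
  NormedSpace.exp A

/-- Hermitian positive (semi)definite square root. -/
noncomputable def msqrt {d : ℕ} (A : Matrix (Fin d) (Fin d) ℂ) : Matrix (Fin d) (Fin d) ℂ :=
  if hA : A.PosSemidef then
    (hA.1.eigenvectorUnitary : Matrix (Fin d) (Fin d) ℂ) *
      Matrix.diagonal ((↑) ∘ (Real.sqrt ∘ hA.1.eigenvalues)) *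
      (star hA.1.eigenvectorUnitary : Matrix (Fin d) (Fin d) ℂ)
  else 1

/-- Frobenius norm. -/
noncomputable def frobNorm {d : ℕ} (A : Matrix (Fin d) (Fin d) ℂ) : ℝ :=
  Real.sqrt ((Aᴴ * A).trace.re)

/-- Affine-invariant Riemannian distance. -/
noncomputable def deltaR {d : ℕ} (p₁ p₂ : Matrix (Fin d) (Fin d) ℂ) : ℝ :=
  frobNorm (mLog ((msqrt p₁)⁻¹ * p₂ * (msqrt p₁)⁻¹))

/-- Real matrix power of an HPD matrix: `x^t = Exp (t • Log x)`. -/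
noncomputable def mPow {d : ℕ} (A : Matrix (Fin d) (Fin d) ℂ) (t : ℝ) : Matrix (Fin d) (Fin d) ℂ :=
  mExp ((t : ℂ) • mLog A)

/-- Riemannian logarithmic map at `p`. -/
noncomputable def logMap {d : ℕ} (p q : Matrix (Fin d) (Fin d) ℂ) : Matrix (Fin d) (Fin d) ℂ :=
  msqrt p * mLog ((msqrt p)⁻¹ * q * (msqrt p)⁻¹) * msqrt p

/-- Riemannian exponential map at `p`. -/
noncomputable def expMap {d : ℕ} (p h : Matrix (Fin d) (Fin d) ℂ) : Matrix (Fin d) (Fin d) ℂ :=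
  msqrt p * mExp ((msqrt p)⁻¹ * h * (msqrt p)⁻¹) * msqrt p

/-- Affine-invariant geodesic from `p₁` to `p₂`. -/
noncomputable def geo {d : ℕ} (p₁ p₂ : Matrix (Fin d) (Fin d) ℂ) (t : ℝ) :
    Matrix (Fin d) (Fin d) ℂ :=
  msqrt p₁ * mPow ((msqrt p₁)⁻¹ * p₂ * (msqrt p₁)⁻¹) t * msqrt p₁

lemma posDef_conj {d : ℕ} {p a : Matrix (Fin d) (Fin d) ℂ} (hp : p.PosDef) (ha : IsUnit a.det) :
    (aᴴ * p * a).PosDef := by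
  have hinj := Matrix.mulVec_injective_iff_isUnit.mpr ((Matrix.isUnit_iff_isUnit_det a).mpr ha)
  exact hp.conjTranspose_mul_mul_same hinj

lemma msqrt_mul_self {d : ℕ} {p : Matrix (Fin d) (Fin d) ℂ} (hp : p.PosSemidef) :
    msqrt p * msqrt p = p := by
  rw [msqrt, dif_pos hp]
  have hU : (star hp.1.eigenvectorUnitary : Matrix (Fin d) (Fin d) ℂ) *
      (hp.1.eigenvectorUnitary : Matrix (Fin d) (Fin d) ℂ) = 1 := Unitary.star_mul_self_of_mem hp.1.eigenvectorUnitary.2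
  have hD : Matrix.diagonal (((↑) : ℝ → ℂ) ∘ (Real.sqrt ∘ hp.1.eigenvalues)) *
      Matrix.diagonal (((↑) : ℝ → ℂ) ∘ (Real.sqrt ∘ hp.1.eigenvalues)) =
      Matrix.diagonal (RCLike.ofReal ∘ hp.1.eigenvalues) := by
    rw [Matrix.diagonal_mul_diagonal]; congr 1; funext i
    simp only [Function.comp_apply, ← Complex.ofReal_mul,
      Real.mul_self_sqrt (hp.eigenvalues_nonneg i)]; rfl
  conv_rhs => rw [hp.1.spectral_theorem]
  rw [Unitary.conjStarAlgAut_apply]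
  calc _ = (hp.1.eigenvectorUnitary : Matrix (Fin d) (Fin d) ℂ) *
      (Matrix.diagonal (((↑) : ℝ → ℂ) ∘ (Real.sqrt ∘ hp.1.eigenvalues)) *
      ((star hp.1.eigenvectorUnitary : Matrix (Fin d) (Fin d) ℂ) *
      (hp.1.eigenvectorUnitary : Matrix (Fin d) (Fin d) ℂ)) *
      Matrix.diagonal (((↑) : ℝ → ℂ) ∘ (Real.sqrt ∘ hp.1.eigenvalues))) *
      (star hp.1.eigenvectorUnitary : Matrix (Fin d) (Fin d) ℂ) := by
        simp only [Matrix.mul_assoc]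
    _ = _ := by rw [hU, Matrix.mul_one, hD]

lemma msqrt_herm {d : ℕ} {p : Matrix (Fin d) (Fin d) ℂ} (hp : p.PosSemidef) :
    (msqrt p)ᴴ = msqrt p := by
  rw [msqrt, dif_pos hp]
  simp only [Matrix.conjTranspose_mul, Matrix.diagonal_conjTranspose, Matrix.mul_assoc,
    Matrix.star_eq_conjTranspose, Matrix.conjTranspose_conjTranspose]
  congr 3
  funext i; simp

lemma msqrt_isUnit {d : ℕ} {p : Matrix (Fin d) (Fin d) ℂ} (hp : p.PosDef) :
    IsUnit (msqrt p).det := by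
  have h : (msqrt p).det * (msqrt p).det = p.det := by
    rw [← Matrix.det_mul, msqrt_mul_self hp.posSemidef]
  exact isUnit_of_mul_isUnit_left (h ▸ hp.det_pos.ne'.isUnit)

theorem expMap_congruence_equivariant {d : ℕ} (p h a : Matrix (Fin d) (Fin d) ℂ)
    (hp : p.PosDef) (hh : h.IsHermitian) (ha : IsUnit a.det) :
    aᴴ * expMap p h * a = expMap (aᴴ * p * a) (aᴴ * h * a) := by
  set s := msqrt p with hs_def
  set q := aᴴ * p * a with hq_def
  set r := msqrt q with hr_def
  have hq : q.PosDef := posDef_conj hp ha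
  have hss : s * s = p := msqrt_mul_self hp.posSemidef
  have hrr : r * r = q := msqrt_mul_self hq.posSemidef
  have hsH : sᴴ = s := msqrt_herm hp.posSemidef
  have hrH : rᴴ = r := msqrt_herm hq.posSemidef
  have hsU : IsUnit s.det := msqrt_isUnit hp
  have hrU : IsUnit r.det := msqrt_isUnit hq
  have hs1 : s * s⁻¹ = 1 := Matrix.mul_nonsing_inv s hsU
  have hs1' : s⁻¹ * s = 1 := Matrix.nonsing_inv_mul s hsU
  have hr1 : r * r⁻¹ = 1 := Matrix.mul_nonsing_inv r hrU
  have hr1' : r⁻¹ * r = 1 := Matrix.nonsing_inv_mul r hrU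
  set b := r⁻¹ * (aᴴ * s) with hb_def
  have hbH : bᴴ = s * a * r⁻¹ := by
    simp [hb_def, Matrix.conjTranspose_mul, Matrix.conjTranspose_nonsing_inv, hsH, hrH,
      Matrix.mul_assoc]
  have hbbH : b * bᴴ = 1 := by
    rw [hbH, hb_def]
    calc r⁻¹ * (aᴴ * s) * (s * a * r⁻¹) = r⁻¹ * (aᴴ * (s * s) * a) * r⁻¹ := by
          simp only [Matrix.mul_assoc]
      _ = r⁻¹ * (r * r) * r⁻¹ := by rw [hss, ← hq_def, hrr]
      _ = 1 := by rw [← Matrix.mul_assoc r⁻¹ r r, hr1', Matrix.one_mul, hr1]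
  have hbdet : IsUnit b.det := by
    have h2 : b.det * bᴴ.det = 1 := by rw [← Matrix.det_mul, hbbH, Matrix.det_one]
    exact IsUnit.of_mul_eq_one _ h2
  have hbU : IsUnit b := (Matrix.isUnit_iff_isUnit_det b).mpr hbdet
  have hbinv : b⁻¹ = bᴴ := Matrix.inv_eq_right_inv hbbH
  have key : r⁻¹ * (aᴴ * h * a) * r⁻¹ = b * (s⁻¹ * h * s⁻¹) * b⁻¹ := by
    rw [hbinv, hbH, hb_def]
    calc r⁻¹ * (aᴴ * h * a) * r⁻¹
        = r⁻¹ * (aᴴ * (1 * h * 1) * a) * r⁻¹ := by rw [Matrix.one_mul, Matrix.mul_one]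
      _ = r⁻¹ * (aᴴ * ((s * s⁻¹) * h * (s⁻¹ * s)) * a) * r⁻¹ := by rw [hs1, hs1']
      _ = r⁻¹ * (aᴴ * s) * (s⁻¹ * h * s⁻¹) * (s * a * r⁻¹) := by
          simp only [Matrix.mul_assoc]
  have hexp : mExp (r⁻¹ * (aᴴ * h * a) * r⁻¹) = b * mExp (s⁻¹ * h * s⁻¹) * b⁻¹ := by
    rw [key]; exact Matrix.exp_conj b _ hbU
  show aᴴ * (s * mExp (s⁻¹ * h * s⁻¹) * s) * a = r * mExp (r⁻¹ * (aᴴ * h * a) * r⁻¹) * r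
  rw [hexp, hbinv, hbH, hb_def]
  symm
  calc r * (r⁻¹ * (aᴴ * s) * mExp (s⁻¹ * h * s⁻¹) * (s * a * r⁻¹)) * r
      = (r * r⁻¹) * (aᴴ * (s * mExp (s⁻¹ * h * s⁻¹) * s) * a) * (r⁻¹ * r) := by
        simp only [Matrix.mul_assoc]
    _ = aᴴ * (s * mExp (s⁻¹ * h * s⁻¹) * s) * a := by
        rw [hr1, hr1', Matrix.one_mul, Matrix.mul_one]
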